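/- Let (M, E, B) be a C*-operator-valued probability space, y = y* ∈ M, and ε > 0. Define h_y(w) := E[(w−y)⁻¹]⁻¹ − w for w ∈ H⁺(B). Then for all w ∈ H⁺(B) with Im w ≥ ε·1, one has ‖h_y(w)‖ ≤ 4‖y‖(1 + 2ε⁻¹‖y‖). -/

import Mathlib

open NormedSpace intervalIntegral

namespace HTBaux

open NormedSpace intervalIntegral

variable {A : Type*} [CStarAlgebra A] [PartialOrder A] [StarOrderedRing A]

lemma smul_nonneg'' {p : A} (hp : 0 ≤ p) {r : ℝ} (hr : 0 ≤ r) : 0 ≤ r • p := by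
  have h := star_left_conjugate_nonneg hp ((Real.sqrt r : ℝ) • (1 : A))
  have hs : star ((Real.sqrt r : ℝ) • (1 : A)) = (Real.sqrt r : ℝ) • (1 : A) := by
    rw [star_smul, star_one, star_trivial]
  rw [hs] at h
  calc (0:A) ≤ _ := h
    _ = r • p := by
        rw [smul_mul_assoc, one_mul, mul_smul_comm, mul_one, smul_smul,
          Real.mul_self_sqrt hr]

lemma smul_le_smul'' {x z : A} (h : x ≤ z) {r : ℝ} (hr : 0 ≤ r) : r • x ≤ r • z := by
  have := smul_nonneg'' (sub_nonneg.2 h) hr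
  rw [smul_sub] at this
  exact sub_nonneg.1 this

lemma coneClosed : IsClosed {x : A | 0 ≤ x} :=
  isClosed_le continuous_const continuous_id

lemma coneConvex : Convex ℝ {x : A | 0 ≤ x} := by
  intro x hx z hz s t hs ht _
  exact add_nonneg (smul_nonneg'' hx hs) (smul_nonneg'' hz ht)

/-- Integral of a continuous nonnegative-valued function is nonnegative. -/
lemma integral_cone {f : ℝ → A} (hf : Continuous f) {t₁ t₂ : ℝ} (h12 : t₁ ≤ t₂)
    (hpos : ∀ t, 0 ≤ f t) : 0 ≤ ∫ t in t₁..t₂, f t := by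
  by_contra hI
  set I : A := ∫ t in t₁..t₂, f t with hIdef
  obtain ⟨g, u, hgs, hgI⟩ :=
    geometric_hahn_banach_closed_point (coneConvex (A := A)) (coneClosed (A := A)) hI
  have hu0 : 0 < u := by simpa using hgs 0 le_rfl
  have hgle : ∀ x : A, 0 ≤ x → g x ≤ 0 := by
    intro x hx
    by_contra hgx
    push_neg at hgx
    obtain ⟨n, hn⟩ := exists_nat_gt (u / g x)
    have hxn : (0:A) ≤ (n : ℝ) • x := smul_nonneg'' hx (by positivity)
    have := hgs _ hxn
    rw [map_smul] at this
    have h5 : (n : ℝ) * g x < u := by simpa using this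
    have h6 : u < (n:ℝ) * g x := (div_lt_iff₀ hgx).1 hn
    linarith only [h5, h6]
  have hcomm : (∫ t in t₁..t₂, g (f t)) = g I := by
    rw [hIdef]
    exact g.intervalIntegral_comp_comm (hf.intervalIntegrable _ _)
  have hle : (∫ t in t₁..t₂, g (f t)) ≤ 0 := by
    have : 0 ≤ ∫ t in t₁..t₂, -g (f t) :=
      intervalIntegral.integral_nonneg h12 (fun s _ => by
        simpa using hgle _ (hpos s))
    rw [intervalIntegral.integral_neg] at this
    linarith only [this]
  rw [hcomm] at hle
  linarith only [hle, hu0, hgI]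

/-- Exponential decay from a differential inequality in the positive cone. -/
lemma decay {P P' : ℝ → A} (hder : ∀ t, HasDerivAt P (P' t) t) (hcont : Continuous P')
    (hpos : ∀ t, 0 ≤ P t) {c : ℝ} (hc : 0 < c) (hineq : ∀ t, P' t + c • P t ≤ 0)
    {T : ℝ} (hT : 0 ≤ T) : ‖P T‖ ≤ Real.exp (-(c * T)) * ‖P 0‖ := by
  have hPcont : Continuous P := by
    refine continuous_iff_continuousAt.2 fun t => (hder t).continuousAt
  set R : ℝ → A := fun t => Real.exp (c * t) • P t with hR
  have hRder : ∀ t, HasDerivAt R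
      (Real.exp (c * t) • P' t + (c * Real.exp (c * t)) • P t) t := by
    intro t
    have h1 : HasDerivAt (fun s : ℝ => Real.exp (c * s)) (Real.exp (c * t) * c) t := by
      have := (Real.hasDerivAt_exp (c * t)).comp t ((hasDerivAt_id t).const_mul c)
      exact this.congr_deriv (by ring)
    have h2 := h1.smul (hder t)
    rw [mul_comm (Real.exp (c * t)) c] at h2
    exact h2
  have key : R T ≤ R 0 := by
    have hFTC : (∫ t in (0:ℝ)..T,
        (Real.exp (c * t) • P' t + (c * Real.exp (c * t)) • P t)) = R T - R 0 := by
      refine intervalIntegral.integral_eq_sub_of_hasDerivAt (fun t _ => hRder t) ?_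
      apply Continuous.intervalIntegrable
      fun_prop
    have hnn : 0 ≤ ∫ t in (0:ℝ)..T,
        -(Real.exp (c * t) • P' t + (c * Real.exp (c * t)) • P t) := by
      refine integral_cone ?_ hT ?_
      · fun_prop
      · intro t
        have h2 : Real.exp (c * t) • (P' t + c • P t) ≤ 0 := by
          have := smul_le_smul'' (hineq t) (le_of_lt (Real.exp_pos (c * t)))
          simpa using this
        have heq : -(Real.exp (c * t) • P' t + (c * Real.exp (c * t)) • P t)
            = -(Real.exp (c * t) • (P' t + c • P t)) := by
          rw [smul_add, smul_smul, mul_comm c (Real.exp (c*t))]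
        rw [heq]
        exact neg_nonneg.2 h2
    rw [intervalIntegral.integral_neg, hFTC] at hnn
    exact sub_nonpos.1 (neg_nonneg.1 hnn)
  -- from `R T ≤ R 0` conclude
  have h1 : (0:A) ≤ R T := smul_nonneg'' (hpos T) (le_of_lt (Real.exp_pos _))
  have h2 : ‖R T‖ ≤ ‖R 0‖ := CStarAlgebra.norm_le_norm_of_nonneg_of_le h1 key
  have h3 : ‖R T‖ = Real.exp (c * T) * ‖P T‖ := by
    rw [hR]; simp [norm_smul, Real.abs_exp]
  have h4 : ‖R 0‖ = ‖P 0‖ := by simp [hR]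
  rw [h3, h4] at h2
  have hePos := Real.exp_pos (c * T)
  rw [Real.exp_neg, inv_mul_eq_div, le_div_iff₀ hePos]
  calc ‖P T‖ * Real.exp (c * T) = Real.exp (c * T) * ‖P T‖ := mul_comm _ _
    _ ≤ ‖P 0‖ := h2


section Elemmas

variable (E : A →ₗ[ℂ] A)

lemma Emono (hEpos : ∀ m : A, 0 ≤ m → 0 ≤ E m) {x z : A} (h : x ≤ z) : E x ≤ E z := by
  have := hEpos _ (sub_nonneg.2 h)
  rw [map_sub] at this
  exact sub_nonneg.1 this

lemma EsmulR (r : ℝ) (x : A) : E (r • x) = r • E x := by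
  rw [← algebraMap_smul ℂ r x, map_smul, algebraMap_smul]

lemma normE_sa [Nontrivial A] (hE1 : E 1 = 1) (hEpos : ∀ m : A, 0 ≤ m → 0 ≤ E m)
    {x : A} (hx : IsSelfAdjoint x) : ‖E x‖ ≤ 3 * ‖x‖ := by
  have hsm : ∀ r : ℝ, E (r • (1:A)) = r • (1:A) := fun r => by rw [EsmulR, hE1]
  have h1 : E x ≤ ‖x‖ • (1:A) := by
    have := Emono E hEpos (hx.le_algebraMap_norm_self)
    rwa [Algebra.algebraMap_eq_smul_one, hsm] at this
  have h2 : -(‖x‖ • (1:A)) ≤ E x := by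
    have := Emono E hEpos (hx.neg_algebraMap_norm_le_self)
    rwa [Algebra.algebraMap_eq_smul_one, map_neg, hsm] at this
  have h3 : (0:A) ≤ E x + ‖x‖ • 1 := by
    exact neg_le_iff_add_nonneg.1 h2
  have h4 : E x + ‖x‖ • 1 ≤ (2 * ‖x‖) • (1:A) := by
    have := add_le_add_left h1 (‖x‖ • (1:A))
    calc E x + ‖x‖ • (1:A) ≤ ‖x‖ • (1:A) + ‖x‖ • (1:A) := this
      _ = (2 * ‖x‖) • (1:A) := by rw [← add_smul]; ring_nf
  have h5 : ‖E x + ‖x‖ • (1:A)‖ ≤ 2 * ‖x‖ := by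
    have := CStarAlgebra.norm_le_norm_of_nonneg_of_le h3 h4
    calc ‖E x + ‖x‖ • (1:A)‖ ≤ ‖(2 * ‖x‖) • (1:A)‖ := this
      _ = 2 * ‖x‖ := by
          rw [norm_smul, CStarRing.norm_one, mul_one, Real.norm_eq_abs, abs_of_nonneg (by positivity)]
  calc ‖E x‖ = ‖E x + ‖x‖ • (1:A) - ‖x‖ • (1:A)‖ := by
        rw [add_sub_cancel_right]
    _ ≤ ‖E x + ‖x‖ • (1:A)‖ + ‖‖x‖ • (1:A)‖ := norm_sub_le _ _
    _ ≤ 2 * ‖x‖ + ‖x‖ := by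
        have : ‖‖x‖ • (1:A)‖ = ‖x‖ := by
          rw [norm_smul, CStarRing.norm_one, mul_one, Real.norm_eq_abs, abs_of_nonneg (norm_nonneg _)]
        rw [this]
        linarith [h5]
    _ = 3 * ‖x‖ := by ring

lemma normE_bound [Nontrivial A] (hE1 : E 1 = 1) (hEpos : ∀ m : A, 0 ≤ m → 0 ≤ E m)
    (hEstar : ∀ m : A, E (star m) = star (E m)) (x : A) : ‖E x‖ ≤ 6 * ‖x‖ := by
  have hre_sa : IsSelfAdjoint (((2:ℂ))⁻¹ • (x + star x)) := by
    rw [IsSelfAdjoint, star_smul, star_add, star_star, add_comm]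
    norm_num
  have hconj : star ((2 * Complex.I : ℂ))⁻¹ = -((2 * Complex.I : ℂ))⁻¹ := by
    simp [Complex.star_def, Complex.ext_iff]
  have him_sa : IsSelfAdjoint (((2 * Complex.I : ℂ))⁻¹ • (x - star x)) := by
    rw [IsSelfAdjoint, star_smul, star_sub, star_star, hconj, neg_smul,
      show star x - x = -(x - star x) by abel, smul_neg, neg_neg]
  have hdecomp : ((2:ℂ))⁻¹ • (x + star x)
      + Complex.I • (((2 * Complex.I : ℂ))⁻¹ • (x - star x)) = x := by
    rw [smul_smul, show (Complex.I * (2 * Complex.I:ℂ)⁻¹) = (2:ℂ)⁻¹ by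
      rw [mul_inv, ← mul_assoc, mul_comm Complex.I (2:ℂ)⁻¹, mul_assoc,
        Complex.mul_inv_cancel Complex.I_ne_zero, mul_one]]
    rw [← smul_add, show x + star x + (x - star x) = (2:ℂ) • x by
      rw [show ((2:ℂ) • x) = x + x from two_smul ℂ x]; abel]
    rw [smul_smul]
    norm_num
  have hnre : ‖((2:ℂ))⁻¹ • (x + star x)‖ ≤ ‖x‖ := by
    rw [norm_smul]
    calc ‖((2:ℂ))⁻¹‖ * ‖x + star x‖ ≤ (1/2) * (‖x‖ + ‖star x‖) := by
          apply mul_le_mul (by norm_num) (norm_add_le _ _) (norm_nonneg _) (by norm_num)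
      _ = ‖x‖ := by rw [norm_star]; ring
  have hnim : ‖((2 * Complex.I : ℂ))⁻¹ • (x - star x)‖ ≤ ‖x‖ := by
    rw [norm_smul]
    have h9 : ‖((2 * Complex.I:ℂ))⁻¹‖ = 1/2 := by
      rw [norm_inv, norm_mul, Complex.norm_I]
      norm_num
    rw [h9]
    calc (1/2) * ‖x - star x‖ ≤ (1/2) * (‖x‖ + ‖star x‖) := by
          apply mul_le_mul_of_nonneg_left (norm_sub_le _ _) (by norm_num)
      _ = ‖x‖ := by rw [norm_star]; ring
  calc ‖E x‖
      = ‖E (((2:ℂ))⁻¹ • (x + star x))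
          + Complex.I • E (((2 * Complex.I : ℂ))⁻¹ • (x - star x))‖ := by
        conv_rhs => rw [← map_smul, ← map_add, hdecomp]
    _ ≤ ‖E (((2:ℂ))⁻¹ • (x + star x))‖
          + ‖Complex.I • E (((2 * Complex.I : ℂ))⁻¹ • (x - star x))‖ := norm_add_le _ _
    _ ≤ 3 * ‖x‖ + 3 * ‖x‖ := by
        have hb1 := normE_sa E hE1 hEpos hre_sa
        have hb2 := normE_sa E hE1 hEpos him_sa
        have : ‖Complex.I • E (((2 * Complex.I : ℂ))⁻¹ • (x - star x))‖
            = ‖E (((2 * Complex.I : ℂ))⁻¹ • (x - star x))‖ := by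
          rw [norm_smul, Complex.norm_I, one_mul]
        rw [this]
        have g1 : ‖E (((2:ℂ))⁻¹ • (x + star x))‖ ≤ 3 * ‖x‖ := le_trans hb1 (by linarith)
        have g2 : ‖E (((2 * Complex.I : ℂ))⁻¹ • (x - star x))‖ ≤ 3 * ‖x‖ :=
          le_trans hb2 (by linarith)
        linarith
    _ = 6 * ‖x‖ := by ring

lemma normE_pos [Nontrivial A] (hE1 : E 1 = 1) (hEpos : ∀ m : A, 0 ≤ m → 0 ≤ E m)
    {p : A} (hp : 0 ≤ p) : ‖E p‖ ≤ ‖p‖ := by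
  have h1 : E p ≤ ‖p‖ • (1:A) := by
    have := Emono E hEpos ((IsSelfAdjoint.of_nonneg hp).le_algebraMap_norm_self)
    rwa [Algebra.algebraMap_eq_smul_one, EsmulR, hE1] at this
  calc ‖E p‖ ≤ ‖‖p‖ • (1:A)‖ := CStarAlgebra.norm_le_norm_of_nonneg_of_le (hEpos _ hp) h1
    _ = ‖p‖ := by
        rw [norm_smul, CStarRing.norm_one, mul_one, Real.norm_eq_abs, abs_of_nonneg (norm_nonneg _)]

lemma schwarzE (B : StarSubalgebra ℂ A)
    (hEmem : ∀ m : A, E m ∈ B) (hEid : ∀ b ∈ B, E b = b)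
    (hEpos : ∀ m : A, 0 ≤ m → 0 ≤ E m)
    (hEstar : ∀ m : A, E (star m) = star (E m))
    (hEbimod : ∀ b₁ ∈ B, ∀ b₂ ∈ B, ∀ m : A, E (b₁ * m * b₂) = b₁ * E m * b₂)
    (x : A) : star (E x) * E x ≤ E (star x * x) := by
  set b : A := E x with hb
  have hbB : b ∈ B := hEmem x
  have h0 : 0 ≤ E (star (x - b) * (x - b)) := hEpos _ (star_mul_self_nonneg _)
  have hexp : star (x - b) * (x - b)
      = star x * x - (1 * star x * b) - (star b * x * 1) + star b * b := by
    rw [star_sub]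
    noncomm_ring
  have e1 : E (1 * star x * b) = star b * b := by
    rw [hEbimod 1 (one_mem B) b hbB (star x), hEstar, one_mul, ← hb]
  have e2 : E (star b * x * 1) = star b * b := by
    rw [hEbimod (star b) (star_mem hbB) 1 (one_mem B) x, mul_one, ← hb]
  have e3 : E (star b * b) = star b * b :=
    hEid _ (mul_mem (star_mem hbB) hbB)
  rw [hexp, map_add, map_sub, map_sub, e1, e2, e3] at h0
  have heq : E (star x * x) - star b * b - star b * b + star b * b
      = E (star x * x) - star b * b := by abel
  rw [heq] at h0
  exact sub_nonneg.1 h0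


lemma conj_le_smul {v u : A} : star (v * u) * (v * u) ≤ (‖v‖ * ‖v‖) • (star u * u) := by
  have c3 : star v * v ≤ algebraMap ℝ A (‖v‖ * ‖v‖) := by
    have := (IsSelfAdjoint.star_mul_self v).le_algebraMap_norm_self
    rwa [CStarRing.norm_star_mul_self] at this
  have c4 := star_left_conjugate_le_conjugate c3 u
  have c5 : star u * algebraMap ℝ A (‖v‖ * ‖v‖) * u = (‖v‖ * ‖v‖) • (star u * u) := by
    rw [Algebra.algebraMap_eq_smul_one, mul_smul_comm, mul_one, smul_mul_assoc]
  have c2 : star (v * u) * (v * u) = star u * (star v * v) * u := by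
    rw [star_mul]
    noncomm_ring
  rw [c2]
  rw [c5] at c4
  exact c4

lemma key_norm_bound [Nontrivial A] (B : StarSubalgebra ℂ A)
    (hEmem : ∀ m : A, E m ∈ B) (hEid : ∀ b ∈ B, E b = b)
    (hEpos : ∀ m : A, 0 ≤ m → 0 ≤ E m)
    (hEstar : ∀ m : A, E (star m) = star (E m))
    (hEbimod : ∀ b₁ ∈ B, ∀ b₂ ∈ B, ∀ m : A, E (b₁ * m * b₂) = b₁ * E m * b₂)
    (v u : A) : ‖E (v * u)‖ ≤ ‖v‖ * Real.sqrt ‖E (star u * u)‖ := by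
  have c1 := schwarzE E B hEmem hEid hEpos hEstar hEbimod (v * u)
  have c6 : E (star (v * u) * (v * u)) ≤ (‖v‖ * ‖v‖) • E (star u * u) := by
    have := Emono E hEpos (conj_le_smul (v := v) (u := u))
    rwa [EsmulR] at this
  have c7 : star (E (v * u)) * E (v * u) ≤ (‖v‖ * ‖v‖) • E (star u * u) := le_trans c1 c6
  have c8 : ‖E (v * u)‖ * ‖E (v * u)‖ ≤ (‖v‖ * ‖v‖) * ‖E (star u * u)‖ := by
    rw [← CStarRing.norm_star_mul_self]
    calc ‖star (E (v * u)) * E (v * u)‖ ≤ ‖(‖v‖ * ‖v‖) • E (star u * u)‖ :=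
          CStarAlgebra.norm_le_norm_of_nonneg_of_le (star_mul_self_nonneg _) c7
      _ = (‖v‖ * ‖v‖) * ‖E (star u * u)‖ := by
          rw [norm_smul, Real.norm_eq_abs, abs_of_nonneg (by positivity)]
  have h9 : 0 ≤ ‖v‖ * Real.sqrt ‖E (star u * u)‖ := by positivity
  nlinarith [Real.sq_sqrt (norm_nonneg (E (star u * u))), norm_nonneg (E (v * u)),
    Real.sqrt_nonneg ‖E (star u * u)‖, norm_nonneg v,
    sq_nonneg (‖E (v * u)‖ - ‖v‖ * Real.sqrt ‖E (star u * u)‖),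
    sq_nonneg (‖E (v * u)‖ + ‖v‖ * Real.sqrt ‖E (star u * u)‖)]

end Elemmas

section Invertibility

/-- The operator-imaginary-part algebraic identity. -/
lemma imStep (a m : A) :
    star ((Complex.I:ℂ) • a * m) * m + star m * ((Complex.I:ℂ) • a * m)
      = (-2:ℝ) • (star m * ((((2*Complex.I)⁻¹:ℂ) • (a - star a)) * m)) := by
  have hsm : (-2:ℝ) • (star m * ((((2*Complex.I)⁻¹:ℂ) • (a - star a)) * m))
      = ((-2:ℂ) * ((2*Complex.I)⁻¹:ℂ)) • (star m * ((a - star a) * m)) := by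
    rw [smul_mul_assoc, mul_smul_comm, ← algebraMap_smul ℂ (-2:ℝ), smul_smul]
    congr 1
    rw [show (algebraMap ℝ ℂ) (-2:ℝ) = (-2:ℂ) by norm_num]
  have hc : ((-2:ℂ) * ((2*Complex.I)⁻¹:ℂ)) = Complex.I := by
    field_simp
    rw [Complex.I_sq]
  rw [hsm, hc]
  simp only [star_mul, star_smul, Complex.star_def, Complex.conj_I, neg_smul, neg_mul,
    smul_mul_assoc, mul_smul_comm, sub_mul, mul_sub, smul_sub, mul_assoc]
  abel

variable [Nontrivial A]

lemma isUnit_of_posIm {a : A} {ε : ℝ} (hε : 0 < ε)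
    (him : (ε:ℂ) • (1:A) ≤ ((2*Complex.I)⁻¹:ℂ) • (a - star a)) : IsUnit a := by
  set ia : A := (Complex.I:ℂ) • a with hia
  set m : ℝ → A := fun t => exp (t • ia) with hm
  have hmder : ∀ t : ℝ, HasDerivAt m (ia * m t) t := fun t => hasDerivAt_exp_smul_const' ia t
  have hmder2 : ∀ t : ℝ, HasDerivAt m (m t * ia) t := fun t => hasDerivAt_exp_smul_const ia t
  have hmcont : Continuous m := continuous_iff_continuousAt.2 fun t => (hmder t).continuousAt
  have hm0 : m 0 = 1 := by
    show exp ((0:ℝ) • ia) = 1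
    rw [zero_smul, NormedSpace.exp_zero]
  set Ima : A := ((2*Complex.I)⁻¹:ℂ) • (a - star a) with hIma
  set P : ℝ → A := fun t => star (m t) * m t with hP
  set P' : ℝ → A := fun t => (-2:ℝ) • (star (m t) * (Ima * m t)) with hP'
  have hPder : ∀ t, HasDerivAt P (P' t) t := by
    intro t
    have h1 := ((hmder t).star.mul (hmder t))
    have h2 : star (ia * m t) * m t + star (m t) * (ia * m t) = P' t := by
      show _ = (-2:ℝ) • (star (m t) * (Ima * m t))
      rw [hIma, hia]
      exact imStep a (m t)
    rw [h2] at h1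
    exact h1
  have hP'cont : Continuous P' := by
    rw [hP']
    exact continuous_const.smul ((hmcont.star).mul (continuous_const.mul hmcont))
  have hPpos : ∀ t, 0 ≤ P t := fun t => star_mul_self_nonneg _
  have hineq : ∀ t, P' t + (2*ε) • P t ≤ 0 := by
    intro t
    have hposin : 0 ≤ star (m t) * ((Ima - (ε:ℂ) • 1) * m t) := by
      have := star_left_conjugate_nonneg (sub_nonneg.2 him) (m t)
      rwa [mul_assoc] at this
    have hkey : P' t + (2*ε) • P t = (-2:ℝ) • (star (m t) * ((Ima - (ε:ℂ) • 1) * m t)) := by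
      show (-2:ℝ) • (star (m t) * (Ima * m t)) + (2*ε) • (star (m t) * m t) = _
      rw [sub_mul, mul_sub, smul_sub]
      have h5 : ((ε:ℂ) • (1:A)) * m t = ε • m t := by
        rw [smul_mul_assoc, one_mul, ← algebraMap_smul ℂ ε (m t)]
        norm_num
      rw [h5, mul_smul_comm]
      have h6 : (-2:ℝ) • (ε • (star (m t) * m t)) = -((2*ε) • (star (m t) * m t)) := by
        rw [smul_smul, ← neg_smul]
        norm_num
      rw [h6]
      abel
    rw [hkey]
    have h10 := smul_nonneg'' hposin (by norm_num : (0:ℝ) ≤ 2)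
    have h7 : (-2:ℝ) • (star (m t) * ((Ima - (ε:ℂ) • 1) * m t))
        = -((2:ℝ) • (star (m t) * ((Ima - (ε:ℂ) • 1) * m t))) := by
      rw [← neg_smul]
    rw [h7]
    exact neg_nonpos.2 h10
  -- decay
  set T : ℝ := ε⁻¹ with hTdef
  have hT : 0 ≤ T := le_of_lt (by positivity)
  have hdec : ‖P T‖ ≤ Real.exp (-(2*ε*T)) * ‖P 0‖ :=
    decay hPder hP'cont hPpos (by positivity) hineq hT
  have hP0 : ‖P 0‖ = 1 := by
    show ‖star (m 0) * m 0‖ = 1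
    rw [hm0]
    simp
  have hmTlt : ‖m T‖ < 1 := by
    have h1 : ‖m T‖ * ‖m T‖ = ‖P T‖ := (CStarRing.norm_star_mul_self).symm
    have h2 : Real.exp (-(2*ε*T)) = Real.exp (-2) := by
      rw [hTdef]
      congr 1
      field_simp
    rw [hP0, mul_one, h2] at hdec
    nlinarith [norm_nonneg (m T), Real.exp_lt_one_iff.2 (by norm_num : (-2:ℝ) < 0),
      Real.exp_pos (-2)]
  -- integral
  set AT : A := ∫ t in (0:ℝ)..T, m t with hAT
  have hFTC : (∫ t in (0:ℝ)..T, ia * m t) = m T - 1 := by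
    rw [← hm0]
    exact intervalIntegral.integral_eq_sub_of_hasDerivAt (fun t _ => hmder t)
      ((continuous_const.mul hmcont).intervalIntegrable _ _)
  have hFTC2 : (∫ t in (0:ℝ)..T, m t * ia) = m T - 1 := by
    rw [← hm0]
    exact intervalIntegral.integral_eq_sub_of_hasDerivAt (fun t _ => hmder2 t)
      ((hmcont.mul continuous_const).intervalIntegrable _ _)
  have hpull : ia * AT = m T - 1 := by
    have hc1 := (ContinuousLinearMap.mul ℝ A ia).intervalIntegral_comp_comm
      (hmcont.intervalIntegrable (μ := MeasureTheory.volume) (0:ℝ) T)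
    simp only [ContinuousLinearMap.mul_apply'] at hc1
    rw [hAT, ← hc1]
    exact hFTC
  have hpull2 : AT * ia = m T - 1 := by
    have hc1 := ((ContinuousLinearMap.mul ℝ A).flip ia).intervalIntegral_comp_comm
      (hmcont.intervalIntegrable (μ := MeasureTheory.volume) (0:ℝ) T)
    simp only [ContinuousLinearMap.flip_apply, ContinuousLinearMap.mul_apply'] at hc1
    rw [hAT, ← hc1]
    exact hFTC2
  have hnegI : ((-Complex.I) * Complex.I : ℂ) = 1 := by
    rw [neg_mul, Complex.I_mul_I, neg_neg]
  have hnegI2 : ((-Complex.I) * (-Complex.I) : ℂ) = -1 := by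
    rw [neg_mul_neg, Complex.I_mul_I]
  set z : A := (-Complex.I:ℂ) • AT with hz
  have h81 : a * AT = (-Complex.I:ℂ) • (m T - 1) := by
    have h8 : Complex.I • (a * AT) = m T - 1 := by
      rw [← smul_mul_assoc, ← hia]
      exact hpull
    rw [← one_smul ℂ (a * AT), ← hnegI, mul_smul, h8]
  have haz : a * z = 1 - m T := by
    rw [hz, mul_smul_comm, h81, smul_smul, hnegI2, neg_one_smul, neg_sub]
  have h82 : AT * a = (-Complex.I:ℂ) • (m T - 1) := by
    have h8 : Complex.I • (AT * a) = m T - 1 := by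
      rw [← mul_smul_comm, ← hia]
      exact hpull2
    rw [← one_smul ℂ (AT * a), ← hnegI, mul_smul, h8]
  have hza : z * a = 1 - m T := by
    rw [hz, smul_mul_assoc, h82, smul_smul, hnegI2, neg_one_smul, neg_sub]
  set v : Aˣ := Units.oneSub (m T) hmTlt with hv
  have hvval : (v : A) = 1 - m T := rfl
  have hright : a * (z * ↑v⁻¹) = 1 := by
    rw [← mul_assoc, haz, ← hvval]
    exact v.mul_inv
  have hleft : ((↑v⁻¹ : A) * z) * a = 1 := by
    rw [mul_assoc, hza, ← hvval]
    exact v.inv_mul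
  have heq : (↑v⁻¹ : A) * z = z * ↑v⁻¹ := by
    have h20 : ((↑v⁻¹:A) * z) = ((↑v⁻¹:A) * z) * (a * (z * ↑v⁻¹)) := by rw [hright, mul_one]
    rw [h20, ← mul_assoc, mul_assoc ((↑v⁻¹:A) * z) a _, ← mul_assoc ((↑v⁻¹:A) * z) a _]
    rw [hleft, one_mul]
  exact ⟨⟨a, z * ↑v⁻¹, hright, by rw [← heq, hleft]⟩, rfl⟩

end Invertibility

section Approx

variable [Nontrivial A]

lemma expInt {ε : ℝ} (hε : 0 < ε) {T : ℝ} (hT : 0 ≤ T) :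
    ∫ t in (0:ℝ)..T, Real.exp (-(ε*t)) ≤ 1/ε := by
  have hder : ∀ t : ℝ, HasDerivAt (fun s : ℝ => -(1/ε) * Real.exp (-(ε*s)))
      (Real.exp (-(ε*t))) t := by
    intro t
    have h1 : HasDerivAt (fun s : ℝ => -(ε*s)) (-ε) t := by
      exact (((hasDerivAt_id t).const_mul ε).neg).congr_deriv (by ring)
    have h2 := (Real.hasDerivAt_exp (-(ε*t))).comp t h1
    have h3 := h2.const_mul (-(1/ε))
    have : -(1/ε) * (Real.exp (-(ε*t)) * -ε) = Real.exp (-(ε*t)) := by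
      field_simp
    rwa [this] at h3
  have hFTC : (∫ t in (0:ℝ)..T, Real.exp (-(ε*t)))
      = -(1/ε) * Real.exp (-(ε*T)) - -(1/ε) * Real.exp (-(ε*0)) := by
    exact intervalIntegral.integral_eq_sub_of_hasDerivAt (fun t _ => hder t)
      ((Real.continuous_exp.comp (by fun_prop)).intervalIntegrable _ _)
  rw [hFTC]
  have := Real.exp_pos (-(ε*T))
  have h4 : Real.exp (-(ε*0)) = 1 := by norm_num
  rw [h4]
  rw [div_eq_mul_inv]
  nlinarith [Real.exp_pos (-(ε*T)), mul_pos (Real.exp_pos (-(ε*T))) (inv_pos.2 hε)]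

lemma approx_inverse
    (B : StarSubalgebra ℂ A) (E : A →ₗ[ℂ] A)
    (hE1 : E 1 = 1)
    (hEmem : ∀ m : A, E m ∈ B)
    (hEid : ∀ b ∈ B, E b = b)
    (hEpos : ∀ m : A, 0 ≤ m → 0 ≤ E m)
    (hEstar : ∀ m : A, E (star m) = star (E m))
    (hEbimod : ∀ b₁ ∈ B, ∀ b₂ ∈ B, ∀ m : A, E (b₁ * m * b₂) = b₁ * E m * b₂)
    (y : A) (hy : star y = y)
    (ε : ℝ) (hε : 0 < ε)
    (w : A) (hw : w ∈ B)
    (him : (ε : ℂ) • (1 : A) ≤ ((2 * Complex.I)⁻¹ : ℂ) • (w - star w))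
    (ai : A) (hai2 : ai * (w - y) = 1)
    (T : ℝ) (hT : 0 ≤ T) :
    ∃ x r : A, E ai * x = 1 + r ∧ ‖x - (w - E y)‖ ≤ 4 * ‖y‖^2 / ε ∧
      ‖r‖ ≤ (‖ai‖ * (4 * ‖y‖)) * Real.exp (-(ε * T)) := by
  set a : A := w - y with hadef
  have hasub : a - star a = w - star w := by
    rw [hadef, star_sub, hy]
    abel
  set Ima : A := ((2*Complex.I)⁻¹:ℂ) • (a - star a) with hIma
  have him' : (ε:ℂ) • (1:A) ≤ Ima := by rw [hIma, hasub]; exact him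
  set E' : A →L[ℂ] A := E.mkContinuous 6 (normE_bound E hE1 hEpos hEstar) with hE'
  set E'' : A →L[ℝ] A := E'.restrictScalars ℝ with hE''
  have hE''app : ∀ x : A, E'' x = E x := fun x => rfl
  set ia : A := (Complex.I:ℂ) • a with hia
  set Sop : A →L[ℝ] A :=
    ContinuousLinearMap.mul ℝ A ia - E''.comp (ContinuousLinearMap.mul ℝ A ia) with hSop
  have hSapp : ∀ x : A, Sop x = ia * x - E (ia * x) := by
    intro x
    rw [hSop]
    simp [ContinuousLinearMap.sub_apply, ContinuousLinearMap.comp_apply,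
      ContinuousLinearMap.mul_apply', hE''app]
  set ybar : A := y - E y with hybar
  have hEybar : E ybar = 0 := by
    rw [hybar, map_sub, hEid _ (hEmem y), sub_self]
  set u : ℝ → A := fun t => (exp (t • Sop)) ybar with hu
  have hu_der : ∀ t, HasDerivAt u (Sop (u t)) t := by
    intro t
    have h := hasDerivAt_exp_smul_const' (𝕂 := ℝ) Sop t
    have h2 := h.clm_apply (hasDerivAt_const t ybar)
    simp only [ContinuousLinearMap.mul_apply, map_zero, add_zero] at h2
    exact h2
  have hu_cont : Continuous u := continuous_iff_continuousAt.2 fun t => (hu_der t).continuousAt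
  have hu0 : u 0 = ybar := by
    show (exp ((0:ℝ) • Sop)) ybar = ybar
    rw [show ((0:ℝ) • Sop) = 0 from zero_smul ℝ Sop, NormedSpace.exp_zero,
      ContinuousLinearMap.one_apply]
  have hESop : ∀ x : A, E (Sop x) = 0 := by
    intro x
    rw [hSapp, map_sub, hEid _ (hEmem (ia * x)), sub_self]
  have hEu : ∀ t, E (u t) = 0 := by
    have hg : ∀ t, HasDerivAt (fun t => E'' (u t)) 0 t := by
      intro t
      have h := E''.hasFDerivAt.comp_hasDerivAt t (hu_der t)
      rw [hE''app, hESop] at h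
      exact h
    have hdiff : Differentiable ℝ (fun t => E'' (u t)) := fun t => (hg t).differentiableAt
    have hfder : ∀ t : ℝ, fderiv ℝ (fun t => E'' (u t)) t = 0 := by
      intro t
      have := (hg t).hasFDerivAt.fderiv
      rw [this]
      ext s
      simp
    intro t
    have := is_const_of_fderiv_eq_zero hdiff hfder t 0
    rw [← hE''app]
    rw [this, hE''app, hu0, hEybar]
  -- the algebraic derivative identity
  have hEexp : ∀ v : A, E v = 0 →
      E (star (Sop v) * v + star v * Sop v) = (-2:ℝ) • E (star v * (Ima * v)) := by
    intro v hv
    have hβ : E (ia * v) ∈ B := hEmem _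
    have hexp : star (Sop v) * v + star v * Sop v
        = (star (ia * v) * v + star v * (ia * v))
          - (star (E (ia * v)) * v * 1) - (1 * star v * E (ia * v)) := by
      rw [hSapp, star_sub, sub_mul, mul_sub]
      noncomm_ring
    rw [hexp, map_sub, map_sub]
    rw [hEbimod _ (star_mem hβ) _ (one_mem B) v, hEbimod _ (one_mem B) _ hβ (star v)]
    rw [hv, hEstar, hv]
    simp only [mul_zero, zero_mul, star_zero, mul_one, one_mul, sub_zero]
    have him2 := imStep (A := A) a v
    rw [← hia, ← hIma] at him2
    rw [him2, EsmulR]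
  set p : ℝ → A := fun t => E'' (star (u t) * u t) with hp
  set p' : ℝ → A := fun t => (-2:ℝ) • E (star (u t) * (Ima * u t)) with hp'
  have hp_der : ∀ t, HasDerivAt p (p' t) t := by
    intro t
    have h1 := ((hu_der t).star.mul (hu_der t))
    have h2 := E''.hasFDerivAt.comp_hasDerivAt t h1
    have h3 : E'' (star (Sop (u t)) * u t + star (u t) * Sop (u t)) = p' t := by
      rw [hE''app, hEexp _ (hEu t)]
    rw [h3] at h2
    exact h2
  have hp'_cont : Continuous p' := by
    rw [hp']
    have : Continuous fun t => E'' (star (u t) * (Ima * u t)) := by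
      exact E''.continuous.comp ((hu_cont.star).mul (continuous_const.mul hu_cont))
    exact continuous_const.smul (by simpa [hE''app] using this)
  have hppos : ∀ t, 0 ≤ p t := by
    intro t
    rw [hp]
    exact hEpos _ (star_mul_self_nonneg _)
  have hineq : ∀ t, p' t + (2*ε) • p t ≤ 0 := by
    intro t
    have hposin : 0 ≤ E (star (u t) * ((Ima - (ε:ℂ) • 1) * u t)) := by
      apply hEpos
      have := star_left_conjugate_nonneg (sub_nonneg.2 him') (u t)
      rwa [mul_assoc] at this
    have hkey : p' t + (2*ε) • p t = (-2:ℝ) • E (star (u t) * ((Ima - (ε:ℂ) • 1) * u t)) := by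
      show (-2:ℝ) • E (star (u t) * (Ima * u t)) + (2*ε) • E'' (star (u t) * u t) = _
      rw [hE''app]
      have hel : star (u t) * ((Ima - (ε:ℂ) • 1) * u t)
          = star (u t) * (Ima * u t) - ε • (star (u t) * u t) := by
        rw [sub_mul, mul_sub]
        have h5 : ((ε:ℂ) • (1:A)) * u t = ε • u t := by
          rw [smul_mul_assoc, one_mul, ← algebraMap_smul ℂ ε (u t)]
          norm_num
        rw [h5, mul_smul_comm]
      rw [hel, map_sub]
      rw [show E (ε • (star (u t) * u t)) = ε • E (star (u t) * u t) from EsmulR E ε _]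
      rw [smul_sub]
      have h6 : (-2:ℝ) • (ε • E (star (u t) * u t)) = -((2*ε) • E (star (u t) * u t)) := by
        rw [smul_smul, ← neg_smul]
        norm_num
      rw [h6]
      abel
    rw [hkey]
    have h10 := smul_nonneg'' hposin (by norm_num : (0:ℝ) ≤ 2)
    have h7 : (-2:ℝ) • E (star (u t) * ((Ima - (ε:ℂ) • 1) * u t))
        = -((2:ℝ) • E (star (u t) * ((Ima - (ε:ℂ) • 1) * u t))) := by
      rw [← neg_smul]
    rw [h7]
    exact neg_nonpos.2 h10
  have hdecay : ∀ t : ℝ, 0 ≤ t → ‖p t‖ ≤ Real.exp (-(2*ε*t)) * ‖p 0‖ :=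
    fun t ht => decay hp_der hp'_cont hppos (by positivity) hineq ht
  have hybar4 : ‖ybar‖ ≤ 4 * ‖y‖ := by
    rw [hybar]
    calc ‖y - E y‖ ≤ ‖y‖ + ‖E y‖ := norm_sub_le _ _
      _ ≤ ‖y‖ + 3 * ‖y‖ := by
          have := normE_sa E hE1 hEpos (show IsSelfAdjoint y from hy)
          linarith
      _ = 4 * ‖y‖ := by ring
  have hp0 : ‖p 0‖ ≤ ‖ybar‖^2 := by
    show ‖E'' (star (u 0) * u 0)‖ ≤ ‖ybar‖^2
    rw [hE''app, hu0]
    calc ‖E (star ybar * ybar)‖ ≤ ‖star ybar * ybar‖ :=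
          normE_pos E hE1 hEpos (star_mul_self_nonneg _)
      _ ≤ ‖star ybar‖ * ‖ybar‖ := norm_mul_le _ _
      _ = ‖ybar‖^2 := by rw [norm_star]; ring
  have hsqrtp : ∀ t : ℝ, 0 ≤ t → Real.sqrt ‖p t‖ ≤ Real.exp (-(ε*t)) * ‖ybar‖ := by
    intro t ht
    have h1 : ‖p t‖ ≤ (Real.exp (-(ε*t)) * ‖ybar‖)^2 := by
      calc ‖p t‖ ≤ Real.exp (-(2*ε*t)) * ‖p 0‖ := hdecay t ht
        _ ≤ Real.exp (-(2*ε*t)) * ‖ybar‖^2 := by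
            apply mul_le_mul_of_nonneg_left hp0 (le_of_lt (Real.exp_pos _))
        _ = (Real.exp (-(ε*t)) * ‖ybar‖)^2 := by
            rw [mul_pow, ← Real.exp_nat_mul]
            ring_nf
    calc Real.sqrt ‖p t‖ ≤ Real.sqrt ((Real.exp (-(ε*t)) * ‖ybar‖)^2) := Real.sqrt_le_sqrt h1
      _ = Real.exp (-(ε*t)) * ‖ybar‖ := Real.sqrt_sq (by positivity)
  set X : ℝ → A := fun t => E'' (y * u t) with hX
  have hXbound : ∀ t : ℝ, 0 ≤ t → ‖X t‖ ≤ (‖y‖ * ‖ybar‖) * Real.exp (-(ε*t)) := by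
    intro t ht
    have h1 : ‖E (y * u t)‖ ≤ ‖y‖ * Real.sqrt ‖E (star (u t) * u t)‖ :=
      key_norm_bound E B hEmem hEid hEpos hEstar hEbimod y (u t)
    calc ‖X t‖ = ‖E (y * u t)‖ := rfl
      _ ≤ ‖y‖ * Real.sqrt ‖p t‖ := h1
      _ ≤ ‖y‖ * (Real.exp (-(ε*t)) * ‖ybar‖) := by
          apply mul_le_mul_of_nonneg_left (hsqrtp t ht) (norm_nonneg _)
      _ = (‖y‖ * ‖ybar‖) * Real.exp (-(ε*t)) := by ring
  set φ : ℝ → A := fun t => E'' (ai * u t) with hφ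
  have hφ_der : ∀ t, HasDerivAt φ ((Complex.I:ℂ) • (E ai * X t)) t := by
    intro t
    have h1 := E''.hasFDerivAt.comp_hasDerivAt t ((hu_der t).const_mul ai)
    have h2 : E'' (ai * Sop (u t)) = (Complex.I:ℂ) • (E ai * X t) := by
      rw [hE''app, hSapp, mul_sub, map_sub]
      have e1 : E (ai * (ia * (u t))) = 0 := by
        rw [hia, smul_mul_assoc, mul_smul_comm, map_smul, ← mul_assoc, hai2,
          one_mul, hEu t, smul_zero]
      have e2 : E (ai * E (ia * u t)) = E ai * E (ia * u t) := by
        conv_lhs => rw [show ai * E (ia * u t) = 1 * ai * E (ia * u t) by rw [one_mul]]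
        rw [hEbimod _ (one_mem B) _ (hEmem (ia * u t)) ai, one_mul]
      have e3 : E (ia * u t) = (Complex.I:ℂ) • (- X t) := by
        rw [hia, smul_mul_assoc, map_smul]
        congr 1
        rw [hadef, sub_mul, map_sub]
        rw [show w * u t = w * u t * 1 by rw [mul_one], hEbimod _ hw _ (one_mem B) (u t),
          hEu t, mul_zero, zero_mul, zero_sub]
        rfl
      rw [e1, e2, e3, zero_sub]
      rw [mul_smul_comm, mul_neg, smul_neg, neg_neg]
    rw [h2] at h1
    exact h1
  have hφcont : Continuous φ := by
    rw [hφ]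
    exact E''.continuous.comp (continuous_const.mul hu_cont)
  have hXcont : Continuous X := by
    rw [hX]
    exact E''.continuous.comp (continuous_const.mul hu_cont)
  set Q : A := ∫ t in (0:ℝ)..T, X t with hQ
  have hFTCφ : (∫ t in (0:ℝ)..T, (Complex.I:ℂ) • (E ai * X t)) = φ T - φ 0 := by
    exact intervalIntegral.integral_eq_sub_of_hasDerivAt (fun t _ => hφ_der t)
      ((continuous_const.smul (continuous_const.mul hXcont)).intervalIntegrable _ _)
  have hpull : ((Complex.I:ℂ) • E ai) * Q = φ T - φ 0 := by
    have hc1 := (ContinuousLinearMap.mul ℝ A ((Complex.I:ℂ) • E ai)).intervalIntegral_comp_comm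
      (hXcont.intervalIntegrable (μ := MeasureTheory.volume) (0:ℝ) T)
    simp only [ContinuousLinearMap.mul_apply'] at hc1
    rw [hQ, ← hc1]
    rw [← hFTCφ]
    congr 1
    ext t
    rw [smul_mul_assoc]
  have hnegI : ((-Complex.I) * Complex.I : ℂ) = 1 := by
    rw [neg_mul, Complex.I_mul_I, neg_neg]
  have hnegI2 : ((-Complex.I) * (-Complex.I) : ℂ) = -1 := by
    rw [neg_mul_neg, Complex.I_mul_I]
  have hEaiQ : E ai * ((-Complex.I:ℂ) • Q) = φ 0 - φ T := by
    have h81 : E ai * Q = (-Complex.I:ℂ) • (φ T - φ 0) := by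
      have h8 : (Complex.I:ℂ) • (E ai * Q) = φ T - φ 0 := by
        rw [← smul_mul_assoc]
        exact hpull
      rw [← one_smul ℂ (E ai * Q), ← hnegI, mul_smul, h8]
    rw [mul_smul_comm, h81, smul_smul, hnegI2, neg_one_smul, neg_sub]
  have hGc : E ai * (w - E y) = 1 + φ 0 := by
    have h1 : E ai * (w - E y) = E (ai * (w - E y)) := by
      have hwEy : w - E y ∈ B := sub_mem hw (hEmem y)
      conv_rhs => rw [show ai * (w - E y) = 1 * ai * (w - E y) by rw [one_mul]]
      rw [hEbimod _ (one_mem B) _ hwEy ai, one_mul]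
    rw [h1]
    have hsum : a + ybar = w - E y := by rw [hadef, hybar]; abel
    have h2 : ai * (w - E y) = 1 + ai * ybar := by
      calc ai * (w - E y) = ai * (a + ybar) := by rw [hsum]
        _ = ai * a + ai * ybar := mul_add _ _ _
        _ = 1 + ai * ybar := by rw [hai2]
    rw [h2, map_add, hE1]
    congr 1
    have hφ0 : φ 0 = E (ai * ybar) := by
      show E'' (ai * u 0) = E (ai * ybar)
      rw [hu0]
      exact hE''app _
    rw [hφ0]
  refine ⟨(w - E y) - (-Complex.I:ℂ) • Q, φ T, ?_, ?_, ?_⟩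
  · rw [mul_sub, hEaiQ, hGc]
    abel
  · rw [sub_sub_cancel_left, norm_neg, norm_smul]
    have hni : ‖(-Complex.I:ℂ)‖ = 1 := by
      rw [norm_neg, Complex.norm_I]
    rw [hni, one_mul]
    have hQb : ‖Q‖ ≤ (‖y‖ * ‖ybar‖) * (1/ε) := by
      rw [hQ]
      have habs : |∫ t in (0:ℝ)..T, (‖y‖ * ‖ybar‖) * Real.exp (-(ε*t))|
          = ∫ t in (0:ℝ)..T, (‖y‖ * ‖ybar‖) * Real.exp (-(ε*t)) := by
        apply abs_of_nonneg
        apply intervalIntegral.integral_nonneg hT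
        intro s _
        positivity
      calc ‖∫ t in (0:ℝ)..T, X t‖
          ≤ |∫ t in (0:ℝ)..T, (‖y‖ * ‖ybar‖) * Real.exp (-(ε*t))| := by
            apply intervalIntegral.norm_integral_le_abs_of_norm_le
            · filter_upwards [MeasureTheory.ae_restrict_mem measurableSet_Ioc] with t ht
              rw [Set.uIoc_of_le hT] at ht
              exact hXbound t (le_of_lt ht.1)
            · exact (Continuous.intervalIntegrable (by fun_prop) _ _)
        _ = ∫ t in (0:ℝ)..T, (‖y‖ * ‖ybar‖) * Real.exp (-(ε*t)) := habs
        _ = (‖y‖ * ‖ybar‖) * ∫ t in (0:ℝ)..T, Real.exp (-(ε*t)) := by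
            rw [intervalIntegral.integral_const_mul]
        _ ≤ (‖y‖ * ‖ybar‖) * (1/ε) := by
            apply mul_le_mul_of_nonneg_left (expInt hε hT) (by positivity)
    calc ‖Q‖ ≤ (‖y‖ * ‖ybar‖) * (1/ε) := hQb
      _ ≤ (‖y‖ * (4*‖y‖)) * (1/ε) := by
          apply mul_le_mul_of_nonneg_right _ (by positivity)
          apply mul_le_mul_of_nonneg_left hybar4 (norm_nonneg _)
      _ = 4 * ‖y‖^2 / ε := by ring
  · have h1 : ‖E (ai * u T)‖ ≤ ‖ai‖ * Real.sqrt ‖E (star (u T) * u T)‖ :=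
      key_norm_bound E B hEmem hEid hEpos hEstar hEbimod ai (u T)
    calc ‖φ T‖ = ‖E (ai * u T)‖ := rfl
      _ ≤ ‖ai‖ * Real.sqrt ‖p T‖ := h1
      _ ≤ ‖ai‖ * (Real.exp (-(ε*T)) * ‖ybar‖) := by
          apply mul_le_mul_of_nonneg_left (hsqrtp T hT) (norm_nonneg _)
      _ ≤ (‖ai‖ * (4 * ‖y‖)) * Real.exp (-(ε * T)) := by
          have h2 : Real.exp (-(ε*T)) * ‖ybar‖ ≤ Real.exp (-(ε*T)) * (4 * ‖y‖) :=
            mul_le_mul_of_nonneg_left hybar4 (le_of_lt (Real.exp_pos _))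
          calc ‖ai‖ * (Real.exp (-(ε*T)) * ‖ybar‖)
              ≤ ‖ai‖ * (Real.exp (-(ε*T)) * (4 * ‖y‖)) :=
                mul_le_mul_of_nonneg_left h2 (norm_nonneg _)
            _ = (‖ai‖ * (4 * ‖y‖)) * Real.exp (-(ε * T)) := by ring

end Approx

lemma exists_goodT (C : ℝ) {ε : ℝ} (hε : 0 < ε) :
    ∃ n : ℕ, C * Real.exp (-(ε * n)) < 1 := by
  have h1 : Filter.Tendsto (fun n : ℕ => -(ε * (n:ℝ))) Filter.atTop Filter.atBot := by
    apply Filter.Tendsto.comp Filter.tendsto_neg_atTop_atBot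
    exact Filter.Tendsto.const_mul_atTop hε tendsto_natCast_atTop_atTop
  have h2 : Filter.Tendsto (fun n : ℕ => C * Real.exp (-(ε * n))) Filter.atTop (nhds (C * 0)) :=
    Filter.Tendsto.const_mul C (Real.tendsto_exp_atBot.comp h1)
  rw [mul_zero] at h2
  have h3 := h2.eventually_lt_const (by norm_num : (0:ℝ) < 1)
  exact h3.exists

end HTBaux

/-- Norm bound for the `h` transform `h_y(w) = E[(w−y)⁻¹]⁻¹ − w` on the shifted
operator upper half-plane: if `Im w ≥ ε·1` then
`‖h_y(w)‖ ≤ 4‖y‖(1 + 2ε⁻¹‖y‖)`. -/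
theorem h_transform_norm_bound {M : Type*} [NormedRing M] [StarRing M] [CStarRing M]
    [CompleteSpace M] [NormedAlgebra ℂ M] [StarModule ℂ M]
    [PartialOrder M] [StarOrderedRing M]
    (B : StarSubalgebra ℂ M) (E : M →ₗ[ℂ] M)
    (hE1 : E 1 = 1)
    (hEmem : ∀ m : M, E m ∈ B)
    (hEid : ∀ b ∈ B, E b = b)
    (hEpos : ∀ m : M, 0 ≤ m → 0 ≤ E m)
    (hEstar : ∀ m : M, E (star m) = star (E m))
    (hEbimod : ∀ b₁ ∈ B, ∀ b₂ ∈ B, ∀ m : M, E (b₁ * m * b₂) = b₁ * E m * b₂)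
    (y : M) (hy : star y = y)
    (ε : ℝ) (hε : 0 < ε)
    (w : M) (hw : w ∈ B)
    (him : (ε : ℂ) • (1 : M) ≤ ((2 * Complex.I)⁻¹ : ℂ) • (w - star w)) :
    ‖Ring.inverse (E (Ring.inverse (w - y))) - w‖ ≤ 4 * ‖y‖ * (1 + 2 * ε⁻¹ * ‖y‖) := by
  rcases subsingleton_or_nontrivial M with hsub | hnt
  · have h0 : (Ring.inverse (E (Ring.inverse (w - y))) - w) = 0 := Subsingleton.elim _ _
    rw [h0, norm_zero]
    positivity
  · letI : CStarAlgebra M :=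
      { ‹NormedRing M›, ‹StarRing M›, ‹CStarRing M›, ‹NormedAlgebra ℂ M›, ‹StarModule ℂ M›,
        ‹CompleteSpace M› with }
    have hasub : (w - y) - star (w - y) = w - star w := by
      rw [star_sub, hy]; abel
    have hima : (ε:ℂ) • (1:M) ≤ ((2*Complex.I)⁻¹:ℂ) • ((w - y) - star (w - y)) := by
      rw [hasub]; exact him
    have ha : IsUnit (w - y) := HTBaux.isUnit_of_posIm hε hima
    obtain ⟨aU, haU⟩ := ha
    have hinv : Ring.inverse (w - y) = (↑aU⁻¹ : M) := by rw [← haU, Ring.inverse_unit]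
    set ai : M := (↑aU⁻¹ : M) with hai
    have hai1 : (w - y) * ai = 1 := by rw [hai, ← haU]; exact aU.mul_inv
    have hai2 : ai * (w - y) = 1 := by rw [hai, ← haU]; exact aU.inv_mul
    set G : M := E ai with hG
    -- left approximate inverse via the mirrored data
    have hy' : star (-y) = -y := by rw [star_neg, hy]
    have hw' : (-star w) ∈ B := neg_mem (star_mem hw)
    have him'' : (ε:ℂ) • (1:M) ≤ ((2*Complex.I)⁻¹:ℂ) • ((-star w) - star (-star w)) := by
      have : (-star w) - star (-star w) = w - star w := by
        rw [star_neg, star_star]; abel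
      rw [this]; exact him
    have ha'eq : (-star w) - (-y) = -star (w - y) := by
      rw [star_sub, hy]; abel
    have hai2' : (-star ai) * ((-star w) - (-y)) = 1 := by
      rw [ha'eq, neg_mul_neg, ← star_mul, hai1, star_one]
    -- left inverse of G
    obtain ⟨n', hn'⟩ := HTBaux.exists_goodT (‖(-star ai : M)‖ * (4 * ‖(-y : M)‖)) hε
    obtain ⟨x', r', hx'eq, _, hr'le⟩ :=
      HTBaux.approx_inverse B E hE1 hEmem hEid hEpos hEstar hEbimod (-y) hy' ε hε
        (-star w) hw' him'' (-star ai) hai2' (n' : ℝ) (Nat.cast_nonneg n')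
    have hr'lt : ‖star r'‖ < 1 := by
      rw [norm_star]
      exact lt_of_le_of_lt hr'le hn'
    have hEstarai : E (-star ai) = -star G := by rw [map_neg, hEstar, hG]
    have hleft0 : (-star x') * G = 1 + star r' := by
      have h1 : (-star G) * x' = 1 + r' := by rw [← hEstarai]; exact hx'eq
      have h2 := congrArg star h1
      rw [star_mul, star_neg, star_star, star_add, star_one] at h2
      calc (-star x') * G = star x' * (-G) := by rw [neg_mul, mul_neg]
        _ = 1 + star r' := h2
    set vL : Mˣ := Units.oneSub (-star r') (by rwa [norm_neg]) with hvL
    have hvLval : (vL : M) = 1 + star r' := by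
      show 1 - (-star r') = 1 + star r'
      rw [sub_neg_eq_add]
    set l : M := (↑vL⁻¹ : M) * (-star x') with hl
    have hlG : l * G = 1 := by
      rw [hl, mul_assoc, hleft0, ← hvLval]
      exact vL.inv_mul
    -- right approximate inverses
    have happrox : ∀ n : ℕ, ∃ x r : M, G * x = 1 + r ∧
        ‖x - (w - E y)‖ ≤ 4 * ‖y‖^2 / ε ∧
        ‖r‖ ≤ (‖ai‖ * (4 * ‖y‖)) * Real.exp (-(ε * n)) := by
      intro n
      obtain ⟨x, r, h1, h2, h3⟩ :=
        HTBaux.approx_inverse B E hE1 hEmem hEid hEpos hEstar hEbimod y hy ε hε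
          w hw him ai hai2 (n : ℝ) (Nat.cast_nonneg n)
      exact ⟨x, r, h1, h2, h3⟩
    obtain ⟨n₀, hn₀⟩ := HTBaux.exists_goodT (‖ai‖ * (4 * ‖y‖)) hε
    obtain ⟨x₀, r₀, hx₀eq, _, hr₀le⟩ := happrox n₀
    have hr₀lt : ‖r₀‖ < 1 := lt_of_le_of_lt hr₀le hn₀
    set vR : Mˣ := Units.oneSub (-r₀) (by rwa [norm_neg]) with hvR
    have hvRval : (vR : M) = 1 + r₀ := by
      show 1 - (-r₀) = 1 + r₀
      rw [sub_neg_eq_add]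
    set ρ : M := x₀ * (↑vR⁻¹ : M) with hρ
    have hGρ : G * ρ = 1 := by
      rw [hρ, ← mul_assoc, hx₀eq, ← hvRval]
      exact vR.mul_inv
    have hlρ : l = ρ := by
      calc l = l * (G * ρ) := by rw [hGρ, mul_one]
        _ = (l * G) * ρ := (mul_assoc l G ρ).symm
        _ = ρ := by rw [hlG, one_mul]
    have hρG : ρ * G = 1 := by rw [← hlρ]; exact hlG
    set GU : Mˣ := ⟨G, ρ, hGρ, hρG⟩ with hGU
    have hFinv : Ring.inverse G = ρ := Ring.inverse_unit GU
    -- final bound by taking limits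
    have hEy3 : ‖E y‖ ≤ 3 * ‖y‖ :=
      HTBaux.normE_sa E hE1 hEpos (show IsSelfAdjoint y from hy)
    have hbound : ∀ n : ℕ, ‖ρ - w‖ ≤
        (3 * ‖y‖ + 4 * ‖y‖^2 / ε) + (‖ρ‖ * (‖ai‖ * (4 * ‖y‖))) * Real.exp (-(ε * n)) := by
      intro n
      obtain ⟨x, r, h1, h2, h3⟩ := happrox n
      have hxρ : ρ - x = -(ρ * r) := by
        have h4 : ρ * (G * x) = ρ * (1 + r) := by rw [h1]
        rw [← mul_assoc, hρG, one_mul, mul_add, mul_one] at h4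
        rw [h4]; abel
      calc ‖ρ - w‖ = ‖(ρ - x) + (x - (w - E y)) + (- E y)‖ := by
            congr 1; abel
        _ ≤ ‖(ρ - x) + (x - (w - E y))‖ + ‖- E y‖ := norm_add_le _ _
        _ ≤ ‖ρ - x‖ + ‖x - (w - E y)‖ + ‖- E y‖ := by
            have := norm_add_le (ρ - x) (x - (w - E y))
            linarith
        _ ≤ ‖ρ * r‖ + (4 * ‖y‖^2 / ε) + (3 * ‖y‖) := by
            rw [hxρ, norm_neg]
            rw [norm_neg]
            gcongr
        _ ≤ ‖ρ‖ * ((‖ai‖ * (4 * ‖y‖)) * Real.exp (-(ε * n))) + (4 * ‖y‖^2 / ε) + 3 * ‖y‖ := by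
            have h5 : ‖ρ * r‖ ≤ ‖ρ‖ * ‖r‖ := norm_mul_le _ _
            have h6 : ‖ρ‖ * ‖r‖ ≤ ‖ρ‖ * ((‖ai‖ * (4 * ‖y‖)) * Real.exp (-(ε * n))) :=
              mul_le_mul_of_nonneg_left h3 (norm_nonneg _)
            linarith
        _ = (3 * ‖y‖ + 4 * ‖y‖^2 / ε) + (‖ρ‖ * (‖ai‖ * (4 * ‖y‖))) * Real.exp (-(ε * n)) := by
            ring
    have hlim : ‖ρ - w‖ ≤ 3 * ‖y‖ + 4 * ‖y‖^2 / ε := by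
      have h1 : Filter.Tendsto (fun n : ℕ => -(ε * (n:ℝ))) Filter.atTop Filter.atBot := by
        apply Filter.Tendsto.comp Filter.tendsto_neg_atTop_atBot
        exact Filter.Tendsto.const_mul_atTop hε tendsto_natCast_atTop_atTop
      have h2 : Filter.Tendsto
          (fun n : ℕ => (3 * ‖y‖ + 4 * ‖y‖^2 / ε)
            + (‖ρ‖ * (‖ai‖ * (4 * ‖y‖))) * Real.exp (-(ε * n))) Filter.atTop
          (nhds ((3 * ‖y‖ + 4 * ‖y‖^2 / ε) + (‖ρ‖ * (‖ai‖ * (4 * ‖y‖))) * 0)) := by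
        apply Filter.Tendsto.const_add
        exact Filter.Tendsto.const_mul _ (Real.tendsto_exp_atBot.comp h1)
      rw [mul_zero, add_zero] at h2
      exact ge_of_tendsto' h2 hbound
    -- rewrite the goal
    rw [hinv, ← hG, hFinv]
    calc ‖ρ - w‖ ≤ 3 * ‖y‖ + 4 * ‖y‖^2 / ε := hlim
      _ ≤ 4 * ‖y‖ * (1 + 2 * ε⁻¹ * ‖y‖) := by
          have hn := norm_nonneg y
          have h1 : 4 * ‖y‖^2 / ε = 4 * ε⁻¹ * ‖y‖^2 := by
            field_simp
          rw [h1]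
          nlinarith [mul_nonneg (inv_nonneg.2 (le_of_lt hε)) (mul_self_nonneg ‖y‖),
            inv_nonneg.2 (le_of_lt hε)]
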